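/- (Corollary 8 of the paper, first part: contraction of the Hopfield network.) Let α ∈ ℝ and W ∈ ℝ^{n×n}, and suppose ‖W‖₂ < α. For x ∈ ℝⁿ let J(x) := −αIₙ + W·diag(1 − tanh²(x₁), …, 1 − tanh²(xₙ)) denote the Jacobian of the Hopfield network ẋ = −αx + W f(x), where f(x)_i = tanh(x_i). Then for every x ∈ ℝⁿ and every unit vector v ∈ ℝⁿ, vᵀ(J(x) + J(x)ᵀ)v ≤ 2(‖W‖₂ − α) < 0; i.e., the largest eigenvalue of J(x)+J(x)ᵀ is at most 2(‖W‖₂ − α), so the network is contractive. -/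

import Mathlib

open Matrix

/-- The operator norm of a matrix, induced by the Euclidean norms
(i.e. the largest singular value). -/
noncomputable def l2OpNorm {n m : ℕ} (M : Matrix (Fin n) (Fin m) ℝ) : ℝ :=
  ‖LinearMap.toContinuousLinearMap (Matrix.toEuclideanLin M)‖

lemma l2OpNorm_mulVec_le {n : ℕ} (W : Matrix (Fin n) (Fin n) ℝ) (u : Fin n → ℝ) :
    Real.sqrt (∑ i, (W *ᵥ u) i ^ 2) ≤ l2OpNorm W * Real.sqrt (∑ i, u i ^ 2) := by
  have h := (LinearMap.toContinuousLinearMap (Matrix.toEuclideanLin W)).le_opNorm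
      (WithLp.toLp 2 u)
  rw [LinearMap.coe_toContinuousLinearMap', Matrix.toEuclideanLin_apply_piLp_toLp] at h
  simp only [EuclideanSpace.norm_eq, PiLp.toLp_apply, sq_abs, Real.norm_eq_abs] at h
  exact h

theorem hopfield_contraction {n : ℕ} (α : ℝ) (W : Matrix (Fin n) (Fin n) ℝ)
    (hW : l2OpNorm W < α) :
    ∀ x v : Fin n → ℝ, ∑ i, v i ^ 2 = 1 →
      (v ⬝ᵥ (((-α • (1 : Matrix (Fin n) (Fin n) ℝ)
            + W * Matrix.diagonal fun i => 1 - Real.tanh (x i) ^ 2)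
          + (-α • (1 : Matrix (Fin n) (Fin n) ℝ)
            + W * Matrix.diagonal fun i => 1 - Real.tanh (x i) ^ 2)ᵀ) *ᵥ v)
        ≤ 2 * (l2OpNorm W - α)) ∧ 2 * (l2OpNorm W - α) < 0 := by
  have hWnn : 0 ≤ l2OpNorm W := norm_nonneg _
  intro x v hv
  refine ⟨?_, by linarith⟩
  set d : Fin n → ℝ := fun i => 1 - Real.tanh (x i) ^ 2 with hd
  set A : Matrix (Fin n) (Fin n) ℝ :=
    -α • (1 : Matrix (Fin n) (Fin n) ℝ) + W * Matrix.diagonal d with hA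
  -- reduce to 2 * v ⬝ᵥ (A *ᵥ v)
  have key : v ⬝ᵥ ((A + Aᵀ) *ᵥ v) = 2 * (v ⬝ᵥ (A *ᵥ v)) := by
    rw [Matrix.add_mulVec, dotProduct_add, Matrix.dotProduct_mulVec v Aᵀ v,
      Matrix.vecMul_transpose, dotProduct_comm]
    ring
  rw [key]
  -- compute v ⬝ᵥ (A *ᵥ v)
  have h1 : v ⬝ᵥ (A *ᵥ v) = -α + v ⬝ᵥ (W *ᵥ (Matrix.diagonal d *ᵥ v)) := by
    rw [hA, Matrix.add_mulVec, dotProduct_add, ← Matrix.mulVec_mulVec]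
    congr 1
    rw [Matrix.smul_mulVec, Matrix.one_mulVec, dotProduct_smul]
    have : v ⬝ᵥ v = 1 := by
      rw [dotProduct]; rw [← hv]; exact Finset.sum_congr rfl fun i _ => (sq (v i)).symm
    rw [this, smul_eq_mul, mul_one]
  -- bound the dot product
  set u : Fin n → ℝ := Matrix.diagonal d *ᵥ v with hu
  have hdle : ∀ i, d i ^ 2 ≤ 1 := by
    intro i
    have h1 : 0 ≤ Real.tanh (x i) ^ 2 := sq_nonneg _
    have h2 : Real.tanh (x i) ^ 2 < 1 := by
      have hc := Real.cosh_pos (x i)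
      have hcs := Real.cosh_sq_sub_sinh_sq (x i)
      have ht : Real.tanh (x i) ^ 2 = Real.sinh (x i) ^ 2 / Real.cosh (x i) ^ 2 := by
        rw [Real.tanh_eq_sinh_div_cosh, div_pow]
      rw [ht, div_lt_one (by positivity)]
      nlinarith
    have : 0 ≤ d i := by simp only [hd]; linarith
    have : d i ≤ 1 := by simp only [hd]; linarith
    nlinarith
  have hunorm : Real.sqrt (∑ i, u i ^ 2) ≤ 1 := by
    have : ∑ i, u i ^ 2 ≤ ∑ i, v i ^ 2 := by
      apply Finset.sum_le_sum
      intro i _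
      have : u i = d i * v i := by
        simp [hu, Matrix.mulVec_diagonal]
      rw [this, mul_pow]
      nlinarith [hdle i, sq_nonneg (v i)]
    calc Real.sqrt (∑ i, u i ^ 2) ≤ Real.sqrt (∑ i, v i ^ 2) := Real.sqrt_le_sqrt this
      _ = 1 := by rw [hv, Real.sqrt_one]
  have hcs : v ⬝ᵥ (W *ᵥ u) ≤ l2OpNorm W := by
    have hCS : v ⬝ᵥ (W *ᵥ u) ≤ Real.sqrt (∑ i, v i ^ 2) * Real.sqrt (∑ i, (W *ᵥ u) i ^ 2) :=
      Real.sum_mul_le_sqrt_mul_sqrt Finset.univ v (W *ᵥ u)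
    have h2 := l2OpNorm_mulVec_le W u
    calc v ⬝ᵥ (W *ᵥ u) ≤ Real.sqrt (∑ i, v i ^ 2) * Real.sqrt (∑ i, (W *ᵥ u) i ^ 2) := hCS
      _ = Real.sqrt (∑ i, (W *ᵥ u) i ^ 2) := by rw [hv, Real.sqrt_one, one_mul]
      _ ≤ l2OpNorm W * Real.sqrt (∑ i, u i ^ 2) := h2
      _ ≤ l2OpNorm W * 1 := by exact mul_le_mul_of_nonneg_left hunorm hWnn
      _ = l2OpNorm W := mul_one _
  rw [h1]
  linarith
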